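/- Suppose R satisfies the Fatou property (preserves increasing unions of measurable sets). Then the following are equivalent: (a) μ(A ∩ B) ≤ ν(R(A) ∩ R(B)) for all A, B ∈ Σ_X; (b) ∫_A f dμ ≤ ∫_{R(A)} f*_R dν for every nonnegative measurable f and every A ∈ Σ_X; (c) ∫_X f g dμ ≤ ∫_Y f*_R g*_R dν for all nonnegative measurable f, g on X (Hardy–Littlewood inequality). -/

import Mathlib

open MeasureTheory Set Filter
open scoped ENNReal

/-- The rearrangement of `f` with respect to the set transformation `R`. -/
noncomputable def rearr {X Y : Type*} (R : Set X → Set Y) (f : X → ℝ) (y : Y) : ℝ≥0∞ :=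
  ∫⁻ t in Set.Ioi (0 : ℝ), (R {x | t < |f x|}).indicator (fun _ => (1 : ℝ≥0∞)) y

section Aux

variable {X Y : Type*} [MeasurableSpace X] [MeasurableSpace Y] {R : Set X → Set Y}

omit [MeasurableSpace X] [MeasurableSpace Y] in
/-- Rational decomposition of membership in `R {x | t < |f x|}`. -/
lemma mem_R_iff (hRunion : ∀ A : ℕ → Set X, Monotone A → R (⋃ j, A j) = ⋃ j, R (A j))
    (hRmono : ∀ E F : Set X, E ⊆ F → R E ⊆ R F) (f : X → ℝ) (t : ℝ) (y : Y) :
    y ∈ R {x | t < |f x|} ↔ ∃ q : ℚ, t < (q : ℝ) ∧ y ∈ R {x | (q : ℝ) < |f x|} := by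
  constructor
  · intro hy
    set A : ℕ → Set X := fun j => {x | t + 1 / (j + 1) < |f x|} with hA
    have hmono : Monotone A := by
      intro i j hij x hx
      have h1 : (1 : ℝ) / (j + 1) ≤ 1 / (i + 1) := by
        apply one_div_le_one_div_of_le (by positivity)
        exact_mod_cast by omega
      simp only [hA, mem_setOf_eq] at hx ⊢
      linarith
    have hUnion : (⋃ j, A j) = {x | t < |f x|} := by
      ext x
      simp only [mem_iUnion, mem_setOf_eq, hA]
      constructor
      · rintro ⟨j, hj⟩
        have : (0 : ℝ) < 1 / (j + 1 : ℝ) := by positivity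
        linarith
      · intro hx
        obtain ⟨n, hn⟩ := exists_nat_one_div_lt (sub_pos.mpr hx)
        exact ⟨n, by linarith⟩
    rw [← hUnion, hRunion A hmono] at hy
    obtain ⟨j, hj⟩ := mem_iUnion.mp hy
    have hpos : t < t + 1 / (j + 1 : ℝ) := by
      have : (0 : ℝ) < 1 / (j + 1 : ℝ) := by positivity
      linarith
    obtain ⟨q, hq1, hq2⟩ := exists_rat_btwn hpos
    refine ⟨q, hq1, hRmono _ _ (fun x hx => ?_) hj⟩
    exact lt_of_le_of_lt hq2.le hx
  · rintro ⟨q, htq, hy⟩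
    exact hRmono _ _ (fun x hx => htq.trans hx) hy

lemma rearr_S_eq (hRunion : ∀ A : ℕ → Set X, Monotone A → R (⋃ j, A j) = ⋃ j, R (A j))
    (hRmono : ∀ E F : Set X, E ⊆ F → R E ⊆ R F) (f : X → ℝ) :
    {p : Y × ℝ | p.1 ∈ R {x | p.2 < |f x|}} =
      ⋃ q : ℚ, (R {x | (q : ℝ) < |f x|}) ×ˢ (Iio (q : ℝ)) := by
  ext ⟨y, t⟩
  simp only [mem_setOf_eq, mem_iUnion, mem_prod, mem_Iio]
  rw [mem_R_iff hRunion hRmono f t y]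
  constructor
  · rintro ⟨q, h1, h2⟩; exact ⟨q, h2, h1⟩
  · rintro ⟨q, h1, h2⟩; exact ⟨q, h2, h1⟩

lemma rearr_S_measurable (hRmeas : ∀ A : Set X, MeasurableSet A → MeasurableSet (R A))
    (hRunion : ∀ A : ℕ → Set X, Monotone A → R (⋃ j, A j) = ⋃ j, R (A j))
    (hRmono : ∀ E F : Set X, E ⊆ F → R E ⊆ R F) {f : X → ℝ} (hf : Measurable f) :
    MeasurableSet {p : Y × ℝ | p.1 ∈ R {x | p.2 < |f x|}} := by
  rw [rearr_S_eq hRunion hRmono f]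
  exact MeasurableSet.iUnion fun q =>
    (hRmeas _ (measurableSet_lt measurable_const hf.abs)).prod measurableSet_Iio

lemma measurable_rearr (hRmeas : ∀ A : Set X, MeasurableSet A → MeasurableSet (R A))
    (hRunion : ∀ A : ℕ → Set X, Monotone A → R (⋃ j, A j) = ⋃ j, R (A j))
    (hRmono : ∀ E F : Set X, E ⊆ F → R E ⊆ R F) {f : X → ℝ} (hf : Measurable f) :
    Measurable (rearr R f) := by
  have hS := rearr_S_measurable hRmeas hRunion hRmono hf (R := R)
  have : Measurable fun y : Y => ∫⁻ t in Ioi (0 : ℝ),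
      ({p : Y × ℝ | p.1 ∈ R {x | p.2 < |f x|}}).indicator (fun _ => (1 : ℝ≥0∞)) (y, t) :=
    Measurable.lintegral_prod_right' (measurable_const.indicator hS)
  exact this

/-- Auxiliary: lintegral on `Ioi 0` of the indicator of `Iio a`. -/
lemma lintegral_Ioi_indicator_Iio (a : ℝ) :
    ∫⁻ t in Ioi (0 : ℝ), (Iio a).indicator (fun _ => (1 : ℝ≥0∞)) t = ENNReal.ofReal a := by
  rw [lintegral_indicator measurableSet_Iio, Measure.restrict_restrict measurableSet_Iio,
    setLIntegral_one]
  rw [show Iio a ∩ Ioi (0 : ℝ) = Ioo 0 a by rw [Set.inter_comm]; rfl]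
  simp [Real.volume_Ioo]

/-- Key: the superlevel sets of `rearr R f` are exactly the images under `R`
of the superlevel sets of `|f|`. -/
lemma superlevel_rearr (hRunion : ∀ A : ℕ → Set X, Monotone A → R (⋃ j, A j) = ⋃ j, R (A j))
    (hRmono : ∀ E F : Set X, E ⊆ F → R E ⊆ R F) (f : X → ℝ) {t : ℝ} (ht : 0 < t) :
    {y | ENNReal.ofReal t < rearr R f y} = R {x | t < |f x|} := by
  ext y
  simp only [mem_setOf_eq]
  constructor
  · intro hy
    by_contra hmem
    have hbound : rearr R f y ≤ ENNReal.ofReal t := by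
      have hle : ∀ s : ℝ, (R {x | s < |f x|}).indicator (fun _ => (1 : ℝ≥0∞)) y
          ≤ (Iio t).indicator (fun _ => (1 : ℝ≥0∞)) s := by
        intro s
        by_cases hst : s < t
        · rw [Set.indicator_of_mem (show s ∈ Iio t from hst)]
          by_cases hy' : y ∈ R {x | s < |f x|}
          · rw [Set.indicator_of_mem hy']
          · rw [Set.indicator_of_notMem hy']
            exact zero_le_one
        · push_neg at hst
          have : y ∉ R {x | s < |f x|} := fun h =>
            hmem (hRmono _ _ (fun x hx => lt_of_le_of_lt hst hx) h)
          rw [Set.indicator_of_notMem this]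
          exact zero_le
      calc rearr R f y
          ≤ ∫⁻ s in Ioi (0 : ℝ), (Iio t).indicator (fun _ => (1 : ℝ≥0∞)) s :=
            lintegral_mono fun s => hle s
        _ = ENNReal.ofReal t := lintegral_Ioi_indicator_Iio t
    exact (not_lt.mpr hbound) hy
  · intro hy
    obtain ⟨q, htq, hq⟩ := (mem_R_iff hRunion hRmono f t y).mp hy
    have hge : ENNReal.ofReal (q : ℝ) ≤ rearr R f y := by
      rw [← lintegral_Ioi_indicator_Iio (q : ℝ)]
      refine lintegral_mono fun s => ?_
      by_cases hs : s < (q : ℝ)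
      · rw [Set.indicator_of_mem (by exact hs : s ∈ Iio ((q : ℝ)))]
        have : y ∈ R {x | s < |f x|} :=
          hRmono _ _ (fun x hx => lt_of_le_of_lt hs.le hx) hq
        rw [Set.indicator_of_mem this]
      · rw [Set.indicator_of_notMem (by exact hs : s ∉ Iio ((q : ℝ)))]
        exact zero_le
    calc ENNReal.ofReal t < ENNReal.ofReal (q : ℝ) :=
          (ENNReal.ofReal_lt_ofReal_iff (ht.trans htq)).mpr htq
      _ ≤ rearr R f y := hge

/-- Layer-cake formula for `ℝ≥0∞`-valued functions and arbitrary measures. -/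
lemma lintegral_eq_layer {Z : Type*} [MeasurableSpace Z] (ρ : Measure Z) {H : Z → ℝ≥0∞}
    (hH : Measurable H) :
    ∫⁻ z, H z ∂ρ = ∫⁻ t in Ioi (0 : ℝ), ρ {z | ENNReal.ofReal t < H z} := by
  have hsetm : MeasurableSet {z | H z = ∞} := hH (measurableSet_singleton ∞)
  by_cases htop : ρ {z | H z = ∞} = 0
  · have hae : ∀ᵐ z ∂ρ, H z ≠ ∞ := by
      rw [ae_iff]
      simpa only [ne_eq, not_not] using htop
    have h1 : ∫⁻ z, H z ∂ρ = ∫⁻ z, ENNReal.ofReal ((H z).toReal) ∂ρ :=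
      lintegral_congr_ae (by
        filter_upwards [hae] with z hz
        rw [ENNReal.ofReal_toReal hz])
    rw [h1, lintegral_eq_lintegral_meas_lt ρ
      (Filter.Eventually.of_forall fun z => ENNReal.toReal_nonneg)
      hH.ennreal_toReal.aemeasurable]
    refine setLIntegral_congr_fun measurableSet_Ioi
      (fun t ht => ?_)
    refine measure_congr ?_
    rw [eventuallyEq_set]
    filter_upwards [hae] with z hz
    exact (ENNReal.ofReal_lt_iff_lt_toReal ht.le hz).symm
  · have hL : ∫⁻ z, H z ∂ρ = ∞ := by
      rw [eq_top_iff]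
      calc (∞ : ℝ≥0∞) = ∫⁻ _ in {z | H z = ∞}, ∞ ∂ρ := by
            rw [setLIntegral_const, ENNReal.top_mul htop]
        _ = ∫⁻ z in {z | H z = ∞}, H z ∂ρ :=
            setLIntegral_congr_fun hsetm
              (fun z hz => hz.symm)
        _ ≤ ∫⁻ z, H z ∂ρ := setLIntegral_le_lintegral _ _
    have hR : ∫⁻ t in Ioi (0 : ℝ), ρ {z | ENNReal.ofReal t < H z} = ∞ := by
      rw [eq_top_iff]
      calc (∞ : ℝ≥0∞) = ρ {z | H z = ∞} * volume (Ioi (0 : ℝ)) := by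
            rw [Real.volume_Ioi, ENNReal.mul_top htop]
        _ = ∫⁻ _ in Ioi (0 : ℝ), ρ {z | H z = ∞} := (setLIntegral_const _ _).symm
        _ ≤ ∫⁻ t in Ioi (0 : ℝ), ρ {z | ENNReal.ofReal t < H z} := by
            refine lintegral_mono fun t => measure_mono fun z hz => ?_
            simp only [mem_setOf_eq] at hz ⊢
            rw [hz]
            exact ENNReal.ofReal_lt_top
    rw [hL, hR]

/-- Weighted layer-cake formula for arbitrary measures. -/
lemma lintegral_mul_eq_layer {Z : Type*} [MeasurableSpace Z] (ρ : Measure Z)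
    {F H : Z → ℝ≥0∞} (hF : Measurable F) (hH : Measurable H) :
    ∫⁻ z, F z * H z ∂ρ
      = ∫⁻ t in Ioi (0 : ℝ), ∫⁻ z in {z | ENNReal.ofReal t < H z}, F z ∂ρ := by
  have h1 : ∫⁻ z, F z * H z ∂ρ = ∫⁻ z, H z ∂(ρ.withDensity F) :=
    (lintegral_withDensity_eq_lintegral_mul ρ hF hH).symm
  rw [h1, lintegral_eq_layer (ρ.withDensity F) hH]
  refine lintegral_congr fun t => ?_
  exact withDensity_apply F (hH measurableSet_Ioi)

/-- Integrating a function of the layered sets of an indicator function. -/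
lemma lintegral_indicator_layers (K : ℝ → ℝ≥0∞) (c : ℝ≥0∞)
    (hc : ∀ t ∈ Ioo (0 : ℝ) 1, K t = c)
    (h0 : ∀ t ∈ Ici (1 : ℝ), K t = 0) :
    ∫⁻ t in Ioi (0 : ℝ), K t = c := by
  rw [← Ioo_union_Ici_eq_Ioi (zero_lt_one (α := ℝ)),
    lintegral_union measurableSet_Ici (Set.disjoint_left.mpr fun t ht h1 => ht.2.not_ge h1)]
  have e1 : ∫⁻ t in Ioo (0 : ℝ) 1, K t = c := by
    rw [setLIntegral_congr_fun measurableSet_Ioo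
      (fun t ht => hc t ht)]
    simp [Real.volume_Ioo]
  have e2 : ∫⁻ t in Ici (1 : ℝ), K t = 0 := by
    rw [setLIntegral_congr_fun measurableSet_Ici
      (fun t ht => h0 t ht)]
    simp
  rw [e1, e2, add_zero]

omit [MeasurableSpace X] in
lemma indicator_layer_set_small (B : Set X) {t : ℝ} (ht : t ∈ Ioo (0 : ℝ) 1) :
    {x | t < |B.indicator (fun _ => (1 : ℝ)) x|} = B := by
  ext x
  by_cases hx : x ∈ B
  · simp [mem_setOf_eq, Set.indicator_of_mem hx, abs_one, ht.2, hx]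
  · simp [mem_setOf_eq, Set.indicator_of_notMem hx, abs_zero, not_lt.mpr ht.1.le, hx]

omit [MeasurableSpace X] in
lemma indicator_layer_set_big (B : Set X) {t : ℝ} (ht : (1 : ℝ) ≤ t) :
    {x | t < |B.indicator (fun _ => (1 : ℝ)) x|} = ∅ := by
  ext x
  simp only [mem_setOf_eq, mem_empty_iff_false, iff_false, not_lt]
  by_cases hx : x ∈ B
  · simp [Set.indicator_of_mem hx, abs_one, ht]
  · simp only [Set.indicator_of_notMem hx, abs_zero]
    linarith

end Aux

theorem stmt7 {X Y : Type*} [MeasurableSpace X] [MeasurableSpace Y]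
    (μ : Measure X) (ν : Measure Y) (R : Set X → Set Y)
    (hR0 : ν (R ∅) = 0)
    (hRmeas : ∀ A : Set X, MeasurableSet A → MeasurableSet (R A))
    (hRunion : ∀ A : ℕ → Set X, Monotone A → R (⋃ j, A j) = ⋃ j, R (A j))
    (hRmono : ∀ E F : Set X, E ⊆ F → R E ⊆ R F) :
    ((∀ A B : Set X, MeasurableSet A → MeasurableSet B →
        μ (A ∩ B) ≤ ν (R A ∩ R B)) ↔
      (∀ (f : X → ℝ), Measurable f → (∀ x, 0 ≤ f x) →
        ∀ A : Set X, MeasurableSet A →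
          ∫⁻ x in A, ENNReal.ofReal (f x) ∂μ ≤ ∫⁻ y in R A, rearr R f y ∂ν)) ∧
    ((∀ (f : X → ℝ), Measurable f → (∀ x, 0 ≤ f x) →
        ∀ A : Set X, MeasurableSet A →
          ∫⁻ x in A, ENNReal.ofReal (f x) ∂μ ≤ ∫⁻ y in R A, rearr R f y ∂ν) ↔
      (∀ (f g : X → ℝ), Measurable f → Measurable g →
        (∀ x, 0 ≤ f x) → (∀ x, 0 ≤ g x) →
          ∫⁻ x, ENNReal.ofReal (f x) * ENNReal.ofReal (g x) ∂μ
            ≤ ∫⁻ y, rearr R f y * rearr R g y ∂ν)) := by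
  -- (1) set-integral of rearr as a layered integral
  have hRAint : ∀ {f : X → ℝ}, Measurable f → ∀ A : Set X, MeasurableSet A →
      ∫⁻ y in R A, rearr R f y ∂ν
        = ∫⁻ t in Ioi (0 : ℝ), ν (R {x | t < |f x|} ∩ R A) := by
    intro f hf A hA
    rw [lintegral_eq_layer (ν.restrict (R A)) (measurable_rearr hRmeas hRunion hRmono hf)]
    refine setLIntegral_congr_fun measurableSet_Ioi
      (fun t ht => ?_)
    rw [superlevel_rearr hRunion hRmono f ht,
      Measure.restrict_apply (hRmeas _ (measurableSet_lt measurable_const hf.abs))]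
  -- (2) layer cake for set-integral of f
  have hAint : ∀ {f : X → ℝ}, Measurable f → (∀ x, 0 ≤ f x) → ∀ A : Set X, MeasurableSet A →
      ∫⁻ x in A, ENNReal.ofReal (f x) ∂μ
        = ∫⁻ t in Ioi (0 : ℝ), μ ({x | t < |f x|} ∩ A) := by
    intro f hf hf0 A hA
    rw [lintegral_eq_lintegral_meas_lt (μ.restrict A)
      (Filter.Eventually.of_forall hf0) hf.aemeasurable]
    refine setLIntegral_congr_fun measurableSet_Ioi
      (fun t ht => ?_)
    rw [Measure.restrict_apply (measurableSet_lt measurable_const hf)]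
    have hset : {a : X | t < f a} = {x : X | t < |f x|} := by
      ext x
      simp only [mem_setOf_eq, abs_of_nonneg (hf0 x)]
    rw [hset]
  -- (3) weighted layer identity on the X side
  have hXmul : ∀ {f g : X → ℝ}, Measurable f → Measurable g → (∀ x, 0 ≤ g x) →
      ∫⁻ x, ENNReal.ofReal (f x) * ENNReal.ofReal (g x) ∂μ
        = ∫⁻ t in Ioi (0 : ℝ), ∫⁻ x in {x | t < |g x|}, ENNReal.ofReal (f x) ∂μ := by
    intro f g hf hg hg0
    rw [lintegral_mul_eq_layer μ (F := fun x => ENNReal.ofReal (f x))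
      (H := fun x => ENNReal.ofReal (g x)) hf.ennreal_ofReal hg.ennreal_ofReal]
    refine setLIntegral_congr_fun measurableSet_Ioi
      (fun t ht => ?_)
    have hset : {x : X | ENNReal.ofReal t < ENNReal.ofReal (g x)} = {x : X | t < |g x|} := by
      ext x
      simp only [mem_setOf_eq, abs_of_nonneg (hg0 x)]
      exact ENNReal.ofReal_lt_ofReal_iff_of_nonneg ht.le
    rw [hset]
  -- (4) weighted layer identity on the Y side
  have hYmul : ∀ {f g : X → ℝ}, Measurable f → Measurable g →
      ∫⁻ y, rearr R f y * rearr R g y ∂ν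
        = ∫⁻ t in Ioi (0 : ℝ), ∫⁻ y in R {x | t < |g x|}, rearr R f y ∂ν := by
    intro f g hf hg
    rw [lintegral_mul_eq_layer ν (measurable_rearr hRmeas hRunion hRmono hf)
      (measurable_rearr hRmeas hRunion hRmono hg)]
    refine setLIntegral_congr_fun measurableSet_Ioi
      (fun t ht => ?_)
    rw [superlevel_rearr hRunion hRmono g ht]
  -- (a) → (b)
  have hab : (∀ A B : Set X, MeasurableSet A → MeasurableSet B →
      μ (A ∩ B) ≤ ν (R A ∩ R B)) →
      (∀ (f : X → ℝ), Measurable f → (∀ x, 0 ≤ f x) →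
        ∀ A : Set X, MeasurableSet A →
          ∫⁻ x in A, ENNReal.ofReal (f x) ∂μ ≤ ∫⁻ y in R A, rearr R f y ∂ν) := by
    intro ha f hf hf0 A hA
    rw [hAint hf hf0 A hA, hRAint hf A hA]
    refine lintegral_mono fun t => ?_
    rw [Set.inter_comm, Set.inter_comm (R _)]
    exact ha A _ hA (measurableSet_lt measurable_const hf.abs)
  -- (b) → (a)
  have hba : (∀ (f : X → ℝ), Measurable f → (∀ x, 0 ≤ f x) →
      ∀ A : Set X, MeasurableSet A →
        ∫⁻ x in A, ENNReal.ofReal (f x) ∂μ ≤ ∫⁻ y in R A, rearr R f y ∂ν) →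
      (∀ A B : Set X, MeasurableSet A → MeasurableSet B →
        μ (A ∩ B) ≤ ν (R A ∩ R B)) := by
    intro hb A B hA hB
    have hfm : Measurable (B.indicator fun _ => (1 : ℝ)) :=
      measurable_const.indicator hB
    have hf0 : ∀ x, 0 ≤ B.indicator (fun _ => (1 : ℝ)) x :=
      fun x => Set.indicator_nonneg (fun _ _ => zero_le_one) x
    have h := hb _ hfm hf0 A hA
    have hLHS : ∫⁻ x in A, ENNReal.ofReal ((B.indicator fun _ => (1 : ℝ)) x) ∂μ
        = μ (A ∩ B) := by
      rw [hAint hfm hf0 A hA]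
      refine lintegral_indicator_layers _ (μ (A ∩ B))
        (fun t ht => by rw [indicator_layer_set_small B ht, Set.inter_comm])
        (fun t ht => by rw [indicator_layer_set_big B ht]; simp)
    have hRHS : ∫⁻ y in R A, rearr R (B.indicator fun _ => (1 : ℝ)) y ∂ν
        = ν (R B ∩ R A) := by
      rw [hRAint hfm A hA]
      refine lintegral_indicator_layers _ (ν (R B ∩ R A))
        (fun t ht => by rw [indicator_layer_set_small B ht])
        (fun t ht => by
          rw [indicator_layer_set_big B ht]
          exact measure_inter_null_of_null_left _ hR0)
    rw [hLHS, hRHS] at h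
    rwa [Set.inter_comm (R A)]
  -- (b) → (c)
  have hbc : (∀ (f : X → ℝ), Measurable f → (∀ x, 0 ≤ f x) →
      ∀ A : Set X, MeasurableSet A →
        ∫⁻ x in A, ENNReal.ofReal (f x) ∂μ ≤ ∫⁻ y in R A, rearr R f y ∂ν) →
      (∀ (f g : X → ℝ), Measurable f → Measurable g →
        (∀ x, 0 ≤ f x) → (∀ x, 0 ≤ g x) →
          ∫⁻ x, ENNReal.ofReal (f x) * ENNReal.ofReal (g x) ∂μ
            ≤ ∫⁻ y, rearr R f y * rearr R g y ∂ν) := by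
    intro hb f g hf hg hf0 hg0
    rw [hXmul hf hg hg0, hYmul hf hg]
    refine lintegral_mono fun t => ?_
    exact hb f hf hf0 _ (measurableSet_lt measurable_const hg.abs)
  -- (c) → (b)
  have hcb : (∀ (f g : X → ℝ), Measurable f → Measurable g →
      (∀ x, 0 ≤ f x) → (∀ x, 0 ≤ g x) →
        ∫⁻ x, ENNReal.ofReal (f x) * ENNReal.ofReal (g x) ∂μ
          ≤ ∫⁻ y, rearr R f y * rearr R g y ∂ν) →
      (∀ (f : X → ℝ), Measurable f → (∀ x, 0 ≤ f x) →
        ∀ A : Set X, MeasurableSet A →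
          ∫⁻ x in A, ENNReal.ofReal (f x) ∂μ ≤ ∫⁻ y in R A, rearr R f y ∂ν) := by
    intro hc f hf hf0 A hA
    have hgm : Measurable (A.indicator fun _ => (1 : ℝ)) :=
      measurable_const.indicator hA
    have hg0 : ∀ x, 0 ≤ A.indicator (fun _ => (1 : ℝ)) x :=
      fun x => Set.indicator_nonneg (fun _ _ => zero_le_one) x
    have h := hc f _ hf hgm hf0 hg0
    have hLHS : ∫⁻ x, ENNReal.ofReal (f x)
        * ENNReal.ofReal ((A.indicator fun _ => (1 : ℝ)) x) ∂μ
        = ∫⁻ x in A, ENNReal.ofReal (f x) ∂μ := by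
      have : ∀ x, ENNReal.ofReal (f x) * ENNReal.ofReal ((A.indicator fun _ => (1 : ℝ)) x)
          = A.indicator (fun x => ENNReal.ofReal (f x)) x := by
        intro x
        by_cases hx : x ∈ A
        · simp [Set.indicator_of_mem hx]
        · simp [Set.indicator_of_notMem hx]
      simp only [this]
      exact lintegral_indicator hA _
    have hRHS : ∫⁻ y, rearr R f y * rearr R (A.indicator fun _ => (1 : ℝ)) y ∂ν
        = ∫⁻ y in R A, rearr R f y ∂ν := by
      rw [hYmul hf hgm]
      refine lintegral_indicator_layers _ _
        (fun t ht => by rw [indicator_layer_set_small A ht])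
        (fun t ht => ?_)
      rw [indicator_layer_set_big A ht, Measure.restrict_eq_zero.mpr hR0]
      simp
    rw [hLHS, hRHS] at h
    exact h
  exact ⟨⟨hab, hba⟩, ⟨hbc, hcb⟩⟩
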